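/- Define ψ^{(-k)}(q) = (1/k!)[k ζ'(1-k,q) - H_{k-1} B_k(q)]. Then for k ≥ 1 and q > 0, ψ^{(-k)}(q+1) = ψ^{(-k)}(q) + (q^{k-1}/(k-1)!)(ln q - H_{k-1}). -/

import Mathlib

open Complex


lemma bern_aux (k : ℕ) (q : ℝ) :
    Polynomial.eval (q+1) ((Polynomial.bernoulli k).map (algebraMap ℚ ℝ)) =
      Polynomial.eval q ((Polynomial.bernoulli k).map (algebraMap ℚ ℝ)) + k * q ^ (k-1) := by
  have hpoly : (Polynomial.bernoulli k).comp (1 + Polynomial.X) =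
      Polynomial.bernoulli k + Polynomial.C (k : ℚ) * Polynomial.X ^ (k-1) := by
    apply Polynomial.funext; intro x
    simp [Polynomial.eval_comp, Polynomial.bernoulli_eval_one_add]
  have := congrArg (fun p => Polynomial.eval q (p.map (algebraMap ℚ ℝ))) hpoly
  simpa [Polynomial.map_comp, Polynomial.eval_comp, add_comm] using this

lemma summ_aux (z : ℂ) (hz : 1 < z.re) (q : ℝ) (hq : 0 < q) :
    Summable (fun n : ℕ => 1 / ((n : ℂ) + (q : ℂ)) ^ z) := by
  have hnorm : ∀ n : ℕ, ‖1 / ((n:ℂ) + (q:ℂ)) ^ z‖ = 1 / ((n:ℝ) + q) ^ z.re := by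
    intro n
    have hpos : (0:ℝ) < (n:ℝ) + q := by positivity
    rw [norm_div, norm_one, show ((n:ℂ) + (q:ℂ)) = (((n:ℝ) + q : ℝ) : ℂ) by push_cast; ring,
      Complex.norm_cpow_eq_rpow_re_of_pos hpos]
  apply Summable.of_norm
  simp only [hnorm]
  rw [← summable_nat_add_iff 1]
  have hbig : Summable fun n : ℕ => 1 / ((n:ℝ) + 1) ^ z.re := by
    have := (summable_nat_add_iff (f := fun n : ℕ => 1 / (n:ℝ) ^ z.re) 1).mpr
      (Real.summable_one_div_nat_rpow.mpr hz)
    simpa using this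
  refine hbig.of_nonneg_of_le (fun n => by positivity) (fun n => ?_)
  apply one_div_le_one_div_of_le (by positivity)
  apply Real.rpow_le_rpow (by positivity) (by push_cast; linarith) (by linarith)


/-- The `k`-th Bernoulli polynomial, evaluated at a real number. -/
noncomputable def bernoulliPoly (k : ℕ) (x : ℝ) : ℝ :=
  Polynomial.eval x ((Polynomial.bernoulli k).map (algebraMap ℚ ℝ))

/-- The `r`-th harmonic number, `H_0 = 0`. -/
noncomputable def harmonicNum (r : ℕ) : ℝ := ∑ i ∈ Finset.range r, (1 : ℝ) / (i + 1)

/-- The balanced negapolygamma `ψ^{(-k)}(q) = (1/k!)[k ζ'(1-k,q) - H_{k-1} B_k(q)]`,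
defined via (any) analytic continuation `F` of the Hurwitz zeta function. -/
noncomputable def balancedNegapolygamma (F : ℂ → ℝ → ℂ) (k : ℕ) (q : ℝ) : ℂ :=
  (1 / (k.factorial : ℂ)) *
    ((k : ℂ) * deriv (fun z => F z q) (1 - k) -
      (harmonicNum (k - 1) : ℂ) * (bernoulliPoly k q : ℂ))

/-- For `k ≥ 1` and `q > 0`,
`ψ^{(-k)}(q+1) = ψ^{(-k)}(q) + (q^{k-1}/(k-1)!)(ln q - H_{k-1})`. -/
theorem balancedNegapolygamma_shift (F : ℂ → ℝ → ℂ)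
    (hF : ∀ q : ℝ, 0 < q → AnalyticOn ℂ (fun z => F z q) {(1 : ℂ)}ᶜ)
    (hFeq : ∀ z : ℂ, 1 < z.re → ∀ q : ℝ, 0 < q →
      F z q = ∑' n : ℕ, 1 / ((n : ℂ) + (q : ℂ)) ^ z)
    (k : ℕ) (hk : 1 ≤ k) (q : ℝ) (hq : 0 < q) :
    balancedNegapolygamma F k (q + 1) =
      balancedNegapolygamma F k q +
        ((q : ℂ) ^ (k - 1) / ((k - 1).factorial : ℂ)) *
          ((Real.log q : ℂ) - (harmonicNum (k - 1) : ℂ)) := by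
  have hq1 : (0:ℝ) < q + 1 := by linarith
  have hqC : (q:ℂ) ≠ 0 := by exact_mod_cast hq.ne'
  set L : ℂ := Complex.log (q:ℂ) with hLdef
  set g : ℂ → ℂ := fun z => Complex.exp (-L * z) with hgdef
  have hgdiff : Differentiable ℂ g := (differentiable_id.const_mul (-L)).cexp
  have hgderiv : ∀ z, HasDerivAt g (-L * g z) z := by
    intro z
    have h1 : HasDerivAt (fun w : ℂ => -L * w) (-L) z := by
      simpa using (hasDerivAt_id z).const_mul (-L)
    have hval : -L * g z = Complex.exp (-L * z) * -L := by simp only [hgdef]; ring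
    rw [hval]
    exact h1.cexp
  have hUopen : IsOpen {z : ℂ | 1 < z.re} := isOpen_lt continuous_const Complex.continuous_re
  have heqU : Set.EqOn (fun z => F z q) (fun z => F z (q+1) + g z) {z : ℂ | 1 < z.re} := by
    intro z hz
    have hz' : 1 < z.re := hz
    have hs := summ_aux z hz' q hq
    have h0 : (1 : ℂ) / (((0:ℕ):ℂ) + (q:ℂ)) ^ z = g z := by
      rw [Nat.cast_zero, zero_add, hgdef]
      rw [Complex.cpow_def_of_ne_zero hqC, one_div, ← Complex.exp_neg]
      ring_nf
      rw [hLdef, mul_comm]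
    have hshift : ∀ n : ℕ, 1 / (((n+1:ℕ):ℂ) + (q:ℂ)) ^ z
        = 1 / ((n:ℂ) + ((q+1:ℝ):ℂ)) ^ z := by
      intro n; congr 2; push_cast; ring
    simp only
    rw [hFeq z hz' q hq, hFeq z hz' (q+1) hq1, Summable.tsum_eq_zero_add hs, h0,
      tsum_congr hshift, add_comm]
  have hopen : IsOpen ({(1:ℂ)}ᶜ : Set ℂ) := isOpen_compl_singleton
  have hA1 : AnalyticOnNhd ℂ (fun z => F z q) {(1:ℂ)}ᶜ :=
    hopen.analyticOn_iff_analyticOnNhd.mp (hF q hq)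
  have hA2' : AnalyticOnNhd ℂ (fun z => F z (q+1)) {(1:ℂ)}ᶜ :=
    hopen.analyticOn_iff_analyticOnNhd.mp (hF (q+1) hq1)
  have hAg : AnalyticOnNhd ℂ g {(1:ℂ)}ᶜ := hgdiff.differentiableOn.analyticOnNhd hopen
  have hA2 : AnalyticOnNhd ℂ (fun z => F z (q+1) + g z) {(1:ℂ)}ᶜ := hA2'.add hAg
  have hpre : IsPreconnected ({(1:ℂ)}ᶜ : Set ℂ) :=
    (isConnected_compl_singleton_of_one_lt_rank
      (by rw [rank_real_complex]; exact Cardinal.one_lt_two) 1).isPreconnected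
  have h2mem : (2:ℂ) ∈ ({(1:ℂ)}ᶜ : Set ℂ) := by norm_num
  have h2U : (2:ℂ) ∈ {z : ℂ | 1 < z.re} := by norm_num
  have hev : (fun z => F z q) =ᶠ[nhds 2] (fun z => F z (q+1) + g z) :=
    Filter.eventuallyEq_of_mem (hUopen.mem_nhds h2U) heqU
  have heq : Set.EqOn (fun z => F z q) (fun z => F z (q+1) + g z) {(1:ℂ)}ᶜ :=
    hA1.eqOn_of_preconnected_of_eventuallyEq hA2 hpre h2mem hev
  have hkC : ((k:ℂ)) ≠ 0 := Nat.cast_ne_zero.mpr (by omega)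
  have hmem : (1 - (k:ℂ)) ∈ ({(1:ℂ)}ᶜ : Set ℂ) := by
    simp only [Set.mem_compl_iff, Set.mem_singleton_iff]
    intro h
    exact hkC (by linear_combination -h)
  have hevd : (fun z => F z q) =ᶠ[nhds (1-(k:ℂ))] (fun z => F z (q+1) + g z) :=
    Filter.eventuallyEq_of_mem (hopen.mem_nhds hmem) heq
  have hderiv_eq : deriv (fun z => F z q) (1-(k:ℂ))
      = deriv (fun z => F z (q+1) + g z) (1-(k:ℂ)) := hevd.deriv_eq
  have hd2 : DifferentiableAt ℂ (fun z => F z (q+1)) (1-(k:ℂ)) :=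
    (hA2' _ hmem).differentiableAt
  have hderiv_add : deriv (fun z => F z (q+1) + g z) (1-(k:ℂ))
      = deriv (fun z => F z (q+1)) (1-(k:ℂ)) + (-L * g (1-(k:ℂ))) := by
    rw [deriv_fun_add hd2 (hgdiff _)]
    congr 1
    exact (hgderiv _).deriv
  have hgval : g (1 - (k:ℂ)) = (q:ℂ) ^ (k-1) := by
    rw [hgdef]
    simp only
    rw [show -L * (1 - (k:ℂ)) = (((k-1:ℕ)):ℂ) * L by
      rw [Nat.cast_sub hk]; push_cast; ring]
    rw [hLdef, Complex.exp_nat_mul, Complex.exp_log hqC]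
  have hLr : L = ((Real.log q : ℝ) : ℂ) := by rw [hLdef, Complex.ofReal_log hq.le]
  have hB : bernoulliPoly k (q+1) = bernoulliPoly k q + k * q^(k-1) := bern_aux k q
  have hfac : ((k.factorial : ℕ) : ℂ) = (k : ℂ) * (((k-1).factorial : ℕ) : ℂ) := by
    rw [← Nat.cast_mul, Nat.mul_factorial_pred (by omega)]
  have hfk : (((k-1).factorial : ℕ) : ℂ) ≠ 0 := Nat.cast_ne_zero.mpr (Nat.factorial_ne_zero _)
  simp only [balancedNegapolygamma]
  rw [hderiv_eq, hderiv_add, hgval, hLr, hB, hfac]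
  push_cast
  field_simp
  ring
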